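/- The discriminant in u of the quartic polynomial λ₁ u⁴ + λ₂ (u-1)²(u+1) (obtained from σ₁ = u⁴ and σ₂ = (u-v)²v(u+v) by setting v = 1) equals λ₁ λ₂³ (256λ₁² - 107λ₁λ₂ - 32λ₂²), up to a nonzero constant multiple, and the quadratic 256λ₁² - 107λ₁λ₂ - 32λ₂² admits two distinct roots [λ₁:λ₂] ∈ ℙ¹(ℂ) with λ₁ ≠ 0 and λ₂ ≠ 0. -/

import Mathlib

open Polynomial Finset

private lemma disc4 (a b c d : ℂ) :
    (a - b)^2 * (a - c)^2 * (a - d)^2 * (b - c)^2 * (b - d)^2 * (c - d)^2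
    = (-27:ℂ) * (a + b + c + d) ^ 4 * (a * b * c * d) ^ 2 + (18:ℂ) * (a + b + c + d) ^ 3 * (a * b + a * c + a * d + b * c + b * d + c * d) * (a * b * c + a * b * d + a * c * d + b * c * d) * (a * b * c * d) + (-4:ℂ) * (a + b + c + d) ^ 3 * (a * b * c + a * b * d + a * c * d + b * c * d) ^ 3 + (-4:ℂ) * (a + b + c + d) ^ 2 * (a * b + a * c + a * d + b * c + b * d + c * d) ^ 3 * (a * b * c * d) + (a + b + c + d) ^ 2 * (a * b + a * c + a * d + b * c + b * d + c * d) ^ 2 * (a * b * c + a * b * d + a * c * d + b * c * d) ^ 2 + (144:ℂ) * (a + b + c + d) ^ 2 * (a * b + a * c + a * d + b * c + b * d + c * d) * (a * b * c * d) ^ 2 + (-6:ℂ) * (a + b + c + d) ^ 2 * (a * b * c + a * b * d + a * c * d + b * c * d) ^ 2 * (a * b * c * d) + (-80:ℂ) * (a + b + c + d) * (a * b + a * c + a * d + b * c + b * d + c * d) ^ 2 * (a * b * c + a * b * d + a * c * d + b * c * d) * (a * b * c * d) + (18:ℂ) * (a + b + c + d) * (a * b + a * c + a * d + b * c + b * d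 + c * d) * (a * b * c + a * b * d + a * c * d + b * c * d) ^ 3 + (-192:ℂ) * (a + b + c + d) * (a * b * c + a * b * d + a * c * d + b * c * d) * (a * b * c * d) ^ 2 + (16:ℂ) * (a * b + a * c + a * d + b * c + b * d + c * d) ^ 4 * (a * b * c * d) + (-4:ℂ) * (a * b + a * c + a * d + b * c + b * d + c * d) ^ 3 * (a * b * c + a * b * d + a * c * d + b * c * d) ^ 2 + (-128:ℂ) * (a * b + a * c + a * d + b * c + b * d + c * d) ^ 2 * (a * b * c * d) ^ 2 + (144:ℂ) * (a * b + a * c + a * d + b * c + b * d + c * d) * (a * b * c + a * b * d + a * c * d + b * c * d) ^ 2 * (a * b * c * d) + (-27:ℂ) * (a * b * c + a * b * d + a * c * d + b * c * d) ^ 4 + (256:ℂ) * (a * b * c * d) ^ 3 := by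
  ring

/-- The discriminant in `u` of the quartic `λ₁ u⁴ + λ₂ (u-1)²(u+1)`
(computed, for `λ₁ ≠ 0`, as `λ₁⁶ ∏_{i<j} (rᵢ - rⱼ)²` over the four roots)
equals `λ₁ λ₂³ (256λ₁² - 107λ₁λ₂ - 32λ₂²)` up to a nonzero constant multiple,
and the quadratic `256λ₁² - 107λ₁λ₂ - 32λ₂²` has two distinct projective
roots `[λ₁:λ₂]` with `λ₁ ≠ 0` and `λ₂ ≠ 0`. -/
theorem stmt_6 :
    (∃ c : ℂ, c ≠ 0 ∧
      ∀ l₁ l₂ : ℂ, ∀ r : Fin 4 → ℂ, l₁ ≠ 0 →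
        (C l₁ * X ^ 4 + C l₂ * (X - 1) ^ 2 * (X + 1)
          = C l₁ * ∏ i, (X - C (r i))) →
        l₁ ^ 6 * ∏ i, ∏ j ∈ Finset.univ.filter (fun j => i < j), (r i - r j) ^ 2
          = c * (l₁ * l₂ ^ 3 * (256 * l₁ ^ 2 - 107 * l₁ * l₂ - 32 * l₂ ^ 2))) ∧
    (∃ t₁ t₂ : ℂ, t₁ ≠ t₂ ∧ t₁ ≠ 0 ∧ t₂ ≠ 0 ∧
      ∀ t : ℂ, 256 * t ^ 2 - 107 * t - 32 = 0 ↔ t = t₁ ∨ t = t₂) := by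
  constructor
  · refine ⟨1, one_ne_zero, ?_⟩
    intro l₁ l₂ r hl₁ heq
    rw [Fin.prod_univ_four] at heq
    have E : ∀ x : ℂ, l₁ * x ^ 4 + l₂ * (x - 1) ^ 2 * (x + 1)
        = l₁ * ((x - r 0) * (x - r 1) * (x - r 2) * (x - r 3)) := by
      intro x
      have := congrArg (Polynomial.eval x) heq
      simpa using this
    have E0 := E 0
    have E1 := E 1
    have Em1 := E (-1)
    have E2 := E 2
    have Em2 := E (-2)
    set t := l₂ / l₁ with ht
    have hl2 : l₂ = l₁ * t := by rw [ht, mul_div_assoc']; exact (mul_div_cancel_left₀ l₂ hl₁).symm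
    have hA : l₁ * (r 0 + r 1 + r 2 + r 3) = l₁ * (-t) := by
      linear_combination (E2 - Em2)/12 + (Em1 - E1)/6 - hl2
    have hB : l₁ * (r 0 * r 1 + r 0 * r 2 + r 0 * r 3 + r 1 * r 2 + r 1 * r 3 + r 2 * r 3)
        = l₁ * (-t) := by
      linear_combination -(Em1 + E1)/2 + E0 - hl2
    have hC : l₁ * (r 0 * r 1 * r 2 + r 0 * r 1 * r 3 + r 0 * r 2 * r 3 + r 1 * r 2 * r 3)
        = l₁ * t := by
      linear_combination (Em2 - E2)/12 + 2*(E1 - Em1)/3 + hl2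
    have hD : l₁ * (r 0 * r 1 * r 2 * r 3) = l₁ * t := by
      linear_combination -E0 + hl2
    have he1 := mul_left_cancel₀ hl₁ hA
    have he2 := mul_left_cancel₀ hl₁ hB
    have he3 := mul_left_cancel₀ hl₁ hC
    have he4 := mul_left_cancel₀ hl₁ hD
    have key : (r 0 - r 1)^2 * (r 0 - r 2)^2 * (r 0 - r 3)^2 * (r 1 - r 2)^2
        * (r 1 - r 3)^2 * (r 2 - r 3)^2
        = 256 * t^3 - 107 * t^4 - 32 * t^5 := by
      rw [disc4 (r 0) (r 1) (r 2) (r 3), he1, he2, he3, he4]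
      ring
    rw [Fin.prod_univ_four,
        show (Finset.univ.filter (fun j => (0:Fin 4) < j)) = {1,2,3} from rfl,
        show (Finset.univ.filter (fun j => (1:Fin 4) < j)) = {2,3} from rfl,
        show (Finset.univ.filter (fun j => (2:Fin 4) < j)) = {3} from rfl,
        show (Finset.univ.filter (fun j => (3:Fin 4) < j)) = ∅ from rfl,
        Finset.prod_insert (by decide), Finset.prod_insert (by decide),
        Finset.prod_insert (by decide), Finset.prod_singleton, Finset.prod_singleton,
        Finset.prod_singleton, Finset.prod_empty, hl2]
    linear_combination l₁ ^ 6 * key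
  · set s : ℂ := ((Real.sqrt 17 : ℝ) : ℂ) with hs
    have h17 : Real.sqrt 17 ^ 2 = 17 := Real.sq_sqrt (by norm_num)
    have hs2 : s ^ 2 = 17 := by
      rw [hs, ← Complex.ofReal_pow, h17]; norm_num
    have hsne : s ≠ 0 := by
      intro h; rw [h] at hs2; norm_num at hs2
    have hp : (107:ℂ) + 51*s ≠ 0 := by
      intro h
      have : s = -107/51 := by linear_combination h/51
      rw [this] at hs2; norm_num at hs2
    have hm : (107:ℂ) - 51*s ≠ 0 := by
      intro h
      have : s = 107/51 := by linear_combination -h/51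
      rw [this] at hs2; norm_num at hs2
    refine ⟨(107 + 51*s)/512, (107 - 51*s)/512, ?_, ?_, ?_, ?_⟩
    · intro h
      apply hsne
      have : (102:ℂ) * s = 0 := by linear_combination 512*h
      simpa using this
    · intro h; exact hp (by linear_combination 512*h)
    · intro h; exact hm (by linear_combination 512*h)
    · intro u
      constructor
      · intro h
        have key : (u - (107 + 51*s)/512) * (u - (107 - 51*s)/512) = 0 := by
          have h512 : (512:ℂ) ≠ 0 := by norm_num
          field_simp
          linear_combination 1024*h - (2601:ℂ)*hs2
        rcases mul_eq_zero.1 key with h' | h'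
        · left; exact sub_eq_zero.1 h'
        · right; exact sub_eq_zero.1 h'
      · rintro (rfl | rfl) <;>
          linear_combination ((2601:ℂ)/1024)*hs2
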